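/- arXiv:2601.06625 — 2 statements merged into one kernel-verified Lean document; each statement's English description precedes it below -/
import Mathlib

section
/- Let p ∈ ℕ₀ and u ∈ H¹(Ω), with π_p u the L² projection of u onto polynomials of degree ≤ p. Then |(u − π_p u)(±1)|² ≤ (2(p+1))/((2p+1)(2p+3)) · |u|₁². In particular, since 2(p+1)/(2p+3) < 1, also |(u − π_p u)(±1)|² ≤ (1/(2p+1)) · |u|₁². -/
open MeasureTheory Polynomial

noncomputable section

/-- The Legendre polynomial of degree `n`, via Rodrigues' formula. -/
def leg (n : ℕ) : Polynomial ℝ :=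
  ((1 : ℝ) / (2 ^ n * n.factorial)) • derivative^[n] ((X ^ 2 - 1) ^ n)

/-- The closed interval `Ω̄ = [-1, 1]`. -/
def Iom : Set ℝ := Set.Icc (-1 : ℝ) 1

/-- Squared `L²(Ω)` norm. -/
def nsq (f : ℝ → ℝ) : ℝ := ∫ x in Iom, f x ^ 2

/-- The `L²(Ω)` inner product. -/
def ip (f g : ℝ → ℝ) : ℝ := ∫ x in Iom, f x * g x

/-- Membership in the Sobolev space `H^k(Ω)` (strong form). -/
def MemH (k : ℕ) (w : ℝ → ℝ) : Prop := ContDiffOn ℝ k w Iom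

/-- The squared Sobolev seminorm `|w|_k² = ‖w^{(k)}‖₀²`. -/
def semSq (k : ℕ) (w : ℝ → ℝ) : ℝ := nsq (iteratedDerivWithin k w Iom)

/-- `P` coincides with a polynomial of degree `≤ p`. -/
def IsPolyDeg (p : ℕ) (P : ℝ → ℝ) : Prop :=
  ∃ q : Polynomial ℝ, q.natDegree ≤ p ∧ ∀ x, P x = q.eval x

/-- `P = π_p w` is the `L²(Ω)` projection of `w` onto polynomials of degree `≤ p`. -/
def IsL2Proj (p : ℕ) (w P : ℝ → ℝ) : Prop :=
  IsPolyDeg p P ∧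
    ∀ v : Polynomial ℝ, v.natDegree ≤ p → ∫ x in Iom, (P x - w x) * v.eval x = 0

/-- `ψ_{i,n}`: the `n`-th primitive of the Legendre polynomial `L_i`. -/
def psi (i : ℕ) : ℕ → ℝ → ℝ
  | 0 => fun x => (leg i).eval x
  | n + 1 => fun x => ∫ t in (-1 : ℝ)..x, psi i n t

/-- `f ∈ Λ_i^j = span{L_i, …, L_j}`. -/
def inLegSpan (i j : ℕ) (f : ℝ → ℝ) : Prop :=
  ∃ c : ℕ → ℝ, ∀ x, f x = ∑ m ∈ Finset.Icc i j, c m * (leg m).eval x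

/-- The defining properties of `q_{p,ν}`. -/
def IsQ (p ν : ℕ) (q : ℝ → ℝ) : Prop :=
  inLegSpan (p - ν) (p + ν + 1) q ∧ q 1 = 1 ∧ q (-1) = 0 ∧
    ∀ i, 1 ≤ i → i ≤ ν → iteratedDeriv i q 1 = 0 ∧ iteratedDeriv i q (-1) = 0

/-- Recursive construction of `q_{p,ν}`. -/
def qrec (p : ℕ) : ℕ → ℝ → ℝ
  | 0 => fun x => ((leg p).eval x + (leg (p + 1)).eval x) / 2
  | ν + 1 => fun x =>
      qrec p ν x
        + (-(iteratedDeriv (ν + 1) (qrec p ν) 1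
              + (-1 : ℝ) ^ p * iteratedDeriv (ν + 1) (qrec p ν) (-1)) / 2) * psi p (ν + 1) x
        + (-(iteratedDeriv (ν + 1) (qrec p ν) 1
              - (-1 : ℝ) ^ p * iteratedDeriv (ν + 1) (qrec p ν) (-1)) / 2) * psi (p + 1) (ν + 1) x

/-- The coefficient `α_{p,ν}` of the recursive construction. -/
def alphaC (p ν : ℕ) : ℝ :=
  -(iteratedDeriv ν (qrec p (ν - 1)) 1 + (-1 : ℝ) ^ p * iteratedDeriv ν (qrec p (ν - 1)) (-1)) / 2

/-- The coefficient `β_{p,ν}` of the recursive construction. -/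
def betaC (p ν : ℕ) : ℝ :=
  -(iteratedDeriv ν (qrec p (ν - 1)) 1 - (-1 : ℝ) ^ p * iteratedDeriv ν (qrec p (ν - 1)) (-1)) / 2

end

/-- Rodrigues numerator. -/
noncomputable def RR (n : ℕ) : Polynomial ℝ := derivative^[n] ((X ^ 2 - 1) ^ n)

lemma X_sq_sub_one_eq : ((X:Polynomial ℝ) ^ 2 - 1) = (X - C 1) * (X - C (-1)) := by
  simp only [map_one, map_neg]; ring

lemma eval_iter_deriv_zero {n k : ℕ} (hk : k < n) {c : ℝ} (hc : c = 1 ∨ c = -1) :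
    (derivative^[k] (((X:Polynomial ℝ) ^ 2 - 1) ^ n)).eval c = 0 := by
  have hdvd : (X - C c) ^ n ∣ ((X:Polynomial ℝ) ^ 2 - 1) ^ n := by
    apply pow_dvd_pow_of_dvd
    rw [X_sq_sub_one_eq]
    rcases hc with h | h <;> subst h
    · exact Dvd.intro _ rfl
    · exact Dvd.intro_left _ rfl
  obtain ⟨r, hr⟩ := Polynomial.pow_sub_dvd_iterate_derivative_of_pow_dvd k hdvd
  rw [hr]
  simp [sub_self, zero_pow (Nat.sub_ne_zero_of_lt hk)]

lemma poly_parts (q r : Polynomial ℝ) :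
    ∫ x in (-1:ℝ)..1, (derivative q).eval x * r.eval x =
      (q.eval 1 * r.eval 1 - q.eval (-1) * r.eval (-1))
        - ∫ x in (-1:ℝ)..1, q.eval x * (derivative r).eval x := by
  have h : ∀ x ∈ Set.uIcc (-1:ℝ) 1, HasDerivAt (fun y => q.eval y * r.eval y)
      ((derivative q).eval x * r.eval x + q.eval x * (derivative r).eval x) x :=
    fun x _ => (q.hasDerivAt x).mul (r.hasDerivAt x)
  have c1 : Continuous fun x : ℝ => (derivative q).eval x * r.eval x :=
    ((derivative q).continuous).mul (r.continuous)
  have c2 : Continuous fun x : ℝ => q.eval x * (derivative r).eval x :=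
    (q.continuous).mul ((derivative r).continuous)
  have hint : IntervalIntegrable
      (fun x => (derivative q).eval x * r.eval x + q.eval x * (derivative r).eval x)
      volume (-1) 1 := ((c1.add c2).intervalIntegrable _ _)
  have := intervalIntegral.integral_eq_sub_of_hasDerivAt h hint
  rw [intervalIntegral.integral_add (c1.intervalIntegrable _ _)
      (c2.intervalIntegrable _ _)] at this
  linarith [this]

lemma iter_parts (n : ℕ) (r : Polynomial ℝ) :
    ∀ k, k ≤ n → ∫ x in (-1:ℝ)..1, (RR n).eval x * r.eval x
      = (-1:ℝ)^k * ∫ x in (-1:ℝ)..1,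
          (derivative^[n-k] (((X:Polynomial ℝ)^2-1)^n)).eval x * (derivative^[k] r).eval x
  | 0, _ => by simp [RR]
  | (k+1), hk => by
    rw [iter_parts n r k (Nat.le_of_succ_le hk)]
    have hnk : n - k = (n - (k+1)) + 1 := by omega
    have hb1 : (derivative^[n - (k+1)] (((X:Polynomial ℝ)^2-1)^n)).eval 1 = 0 :=
      eval_iter_deriv_zero (by omega) (Or.inl rfl)
    have hbm : (derivative^[n - (k+1)] (((X:Polynomial ℝ)^2-1)^n)).eval (-1) = 0 :=
      eval_iter_deriv_zero (by omega) (Or.inr rfl)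
    rw [hnk, Function.iterate_succ_apply',
      poly_parts (derivative^[n-(k+1)] (((X:Polynomial ℝ)^2-1)^n)) (derivative^[k] r),
      hb1, hbm, ← Function.iterate_succ_apply' derivative k r]
    ring

lemma RR_orth {n : ℕ} {r : Polynomial ℝ} (hr : r.natDegree < n) :
    ∫ x in (-1:ℝ)..1, (RR n).eval x * r.eval x = 0 := by
  rw [iter_parts n r n le_rfl, Polynomial.iterate_derivative_eq_zero hr]
  simp

noncomputable def J (n : ℕ) : ℝ := ∫ x in (-1:ℝ)..1, (1-x^2)^n

lemma J_zero : J 0 = 2 := by simp [J]; norm_num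

lemma J_succ (n : ℕ) : (2*(n:ℝ)+3) * J (n+1) = (2*(n:ℝ)+2) * J n := by
  have hd : ∀ x ∈ Set.uIcc (-1:ℝ) 1, HasDerivAt (fun x : ℝ => x * (1-x^2)^(n+1))
      ((2*(n:ℝ)+3)*(1-x^2)^(n+1) - (2*(n:ℝ)+2)*(1-x^2)^n) x := by
    intro x _
    have h1 : HasDerivAt (fun x : ℝ => 1 - x^2) (0 - 2*x) x :=
      (hasDerivAt_const x (1:ℝ)).sub (by simpa using hasDerivAt_pow 2 x)
    have h2 := h1.pow (n+1)
    have h3 := (hasDerivAt_id x).mul h2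
    refine h3.congr_deriv ?_
    simp only [Nat.add_sub_cancel, id_eq, Pi.pow_apply]
    push_cast
    ring
  have hc : Continuous fun x : ℝ =>
      (2*(n:ℝ)+3)*(1-x^2)^(n+1) - (2*(n:ℝ)+2)*(1-x^2)^n := by fun_prop
  have := intervalIntegral.integral_eq_sub_of_hasDerivAt hd (hc.intervalIntegrable _ _)
  rw [intervalIntegral.integral_sub (Continuous.intervalIntegrable (by fun_prop) _ _)
      (Continuous.intervalIntegrable (by fun_prop) _ _),
    intervalIntegral.integral_const_mul, intervalIntegral.integral_const_mul] at this
  rw [J, J]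
  norm_num at this
  linarith

lemma J_eq : ∀ n : ℕ, J n = 2 * 4^n * (n.factorial:ℝ)^2 / ((2*(n:ℝ)+1) * ((2*n).factorial :ℝ))
  | 0 => by simp [J_zero]
  | (n+1) => by
    have h := J_succ n
    have ih := J_eq n
    have h1 : (2*(n+1) : ℕ) = (2*n+1)+1 := by ring
    have h2 : ((2*(n+1)).factorial : ℝ) = (2*(n:ℝ)+2) * ((2*(n:ℝ))+1) * ((2*n).factorial:ℝ) := by
      rw [h1, Nat.factorial_succ, Nat.factorial_succ]
      push_cast
      ring
    have hf : ((2*n).factorial : ℝ) ≠ 0 := Nat.cast_ne_zero.mpr (Nat.factorial_ne_zero _)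
    have hf2 : ((n).factorial : ℝ) ≠ 0 := Nat.cast_ne_zero.mpr (Nat.factorial_ne_zero _)
    have h3 : (2*(n:ℝ)+3) ≠ 0 := by positivity
    have h4 : (2*(n:ℝ)+1) ≠ 0 := by positivity
    have h5 : (2*(n:ℝ)+2) ≠ 0 := by positivity
    rw [ih] at h
    have : J (n+1) = (2*(n:ℝ)+2) * (2 * 4^n * (n.factorial:ℝ)^2 / ((2*(n:ℝ)+1) * ((2*n).factorial :ℝ))) / (2*(n:ℝ)+3) := by
      field_simp at h ⊢
      linarith
    rw [this, h2]
    push_cast [Nat.factorial_succ]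
    field_simp
    ring

lemma monic_f (n : ℕ) : (((X:Polynomial ℝ)^2-1)^n).Monic := by
  rw [show ((X:Polynomial ℝ)^2 - 1) = X^2 - C 1 by rw [map_one]]
  exact (monic_X_pow_sub_C 1 two_ne_zero).pow n

lemma natDegree_f (n : ℕ) : (((X:Polynomial ℝ)^2-1)^n).natDegree = 2*n := by
  rw [show ((X:Polynomial ℝ)^2 - 1) = X^2 - C 1 by rw [map_one],
    (monic_X_pow_sub_C (1:ℝ) two_ne_zero).natDegree_pow, natDegree_X_pow_sub_C, mul_comm]

lemma iter_deriv_top (n : ℕ) :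
    derivative^[2*n] (((X:Polynomial ℝ)^2-1)^n) = Polynomial.C (((2*n).factorial : ℝ)) := by
  have hdeg : (derivative^[2*n] (((X:Polynomial ℝ)^2-1)^n)).natDegree ≤ 0 := by
    refine (natDegree_iterate_derivative _ _).trans ?_
    rw [natDegree_f]
    omega
  rw [eq_C_of_natDegree_le_zero hdeg, coeff_iterate_derivative]
  have hc : (((X:Polynomial ℝ)^2-1)^n).coeff (0 + 2*n) = 1 := by
    rw [zero_add, ← natDegree_f n, ← Polynomial.leadingCoeff]
    exact (monic_f n)
  rw [hc, zero_add, Nat.descFactorial_self]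
  simp

lemma RR_sq (n : ℕ) : ∫ x in (-1:ℝ)..1, (RR n).eval x * (RR n).eval x
    = ((2*n).factorial : ℝ) * J n := by
  have h := iter_parts n (RR n) n le_rfl
  rw [Nat.sub_self] at h
  have hD : derivative^[n] (RR n) = Polynomial.C (((2*n).factorial:ℝ)) := by
    rw [RR, ← Function.iterate_add_apply, ← two_mul, iter_deriv_top]
  rw [hD] at h
  rw [h]
  have h2 : ∫ x in (-1:ℝ)..1,
      ((⇑derivative)^[0] (((X:Polynomial ℝ)^2-1)^n)).eval x
        * (Polynomial.C (((2*n).factorial:ℝ))).eval x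
      = (-1:ℝ)^n * (((2*n).factorial:ℝ) * J n) := by
    rw [J, ← intervalIntegral.integral_const_mul, ← intervalIntegral.integral_const_mul]
    apply intervalIntegral.integral_congr
    intro x _
    simp only [Function.iterate_zero_apply, eval_pow, eval_sub, eval_one, eval_C, eval_X]
    rw [show (x^2-1) = (-1)*(1-x^2) by ring, mul_pow]
    ring
  rw [h2, ← mul_assoc, ← pow_add, ← two_mul, pow_mul]
  norm_num

lemma leg_eval (n : ℕ) (x : ℝ) :
    (leg n).eval x = (1 / (2 ^ n * n.factorial)) * (RR n).eval x := by
  rw [leg, RR, eval_smul, smul_eq_mul]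

lemma leg_natDegree (n : ℕ) : (leg n).natDegree ≤ n := by
  refine (natDegree_smul_le _ _).trans ?_
  refine (natDegree_iterate_derivative _ _).trans ?_
  rw [natDegree_f]; omega

lemma leg_orth {n : ℕ} {r : Polynomial ℝ} (hr : r.natDegree < n) :
    ∫ x in (-1:ℝ)..1, (leg n).eval x * r.eval x = 0 := by
  simp only [leg_eval, mul_assoc]
  rw [intervalIntegral.integral_const_mul, RR_orth hr, mul_zero]

lemma leg_sq (n : ℕ) :
    ∫ x in (-1:ℝ)..1, (leg n).eval x * (leg n).eval x = 2 / (2*(n:ℝ)+1) := by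
  have : ∀ x : ℝ, (leg n).eval x * (leg n).eval x
      = (1 / (2 ^ n * n.factorial))^2 * ((RR n).eval x * (RR n).eval x) := by
    intro x; rw [leg_eval]; ring
  rw [intervalIntegral.integral_congr (fun x _ => this x),
    intervalIntegral.integral_const_mul, RR_sq, J_eq]
  have hf : ((n).factorial : ℝ) ≠ 0 := Nat.cast_ne_zero.mpr (Nat.factorial_ne_zero _)
  have hf2 : (((2*n)).factorial : ℝ) ≠ 0 := Nat.cast_ne_zero.mpr (Nat.factorial_ne_zero _)
  have h2 : ((2:ℝ)^n) ≠ 0 := by positivity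
  have h4 : (2*(n:ℝ)+1) ≠ 0 := by positivity
  have h44 : ((4:ℝ))^n = ((2:ℝ)^n)^2 := by rw [← pow_mul, mul_comm, pow_mul]; norm_num
  field_simp
  rw [h44]

lemma eval_iter_deriv_prod (n : ℕ) (a b : ℝ) :
    (derivative^[n] ((X - C a)^n * (X - C b)^n)).eval a = n.factorial * (a - b)^n := by
  rw [iterate_derivative_mul, eval_finset_sum, Finset.sum_eq_single 0]
  · simp [iterate_derivative_X_sub_pow_self]
  · intro k hk hk0
    rw [Finset.mem_range] at hk
    rw [iterate_derivative_X_sub_pow]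
    have h : n - (n - k) ≠ 0 := by omega
    simp [sub_self, zero_pow h]
  · simp

lemma leg_eval_one (n : ℕ) : (leg n).eval 1 = 1 := by
  have hfe : (((X:Polynomial ℝ)^2-1)^n) = (X - C 1)^n * (X - C (-1))^n := by
    rw [← mul_pow, X_sq_sub_one_eq]
  rw [leg_eval, RR, hfe, eval_iter_deriv_prod]
  have hf : ((n).factorial : ℝ) ≠ 0 := Nat.cast_ne_zero.mpr (Nat.factorial_ne_zero _)
  have h2 : ((2:ℝ)^n) ≠ 0 := by positivity
  rw [show (1:ℝ) - (-1) = 2 by norm_num]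
  field_simp

lemma leg_eval_neg_one (n : ℕ) : (leg n).eval (-1) = (-1:ℝ)^n := by
  have hfe : (((X:Polynomial ℝ)^2-1)^n) = (X - C (-1))^n * (X - C 1)^n := by
    rw [← mul_pow, X_sq_sub_one_eq]; ring
  rw [leg_eval, RR, hfe, eval_iter_deriv_prod]
  have hf : ((n).factorial : ℝ) ≠ 0 := Nat.cast_ne_zero.mpr (Nat.factorial_ne_zero _)
  have h2 : ((2:ℝ)^n) ≠ 0 := by positivity
  rw [show (-1:ℝ) - 1 = (-1) * 2 by norm_num, mul_pow]
  field_simp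

lemma Iom_int (f : ℝ → ℝ) : ∫ x in Set.Icc (-1:ℝ) 1, f x = ∫ x in (-1:ℝ)..1, f x := by
  rw [intervalIntegral.integral_of_le (by norm_num : (-1:ℝ) ≤ 1),
    ← MeasureTheory.integral_Icc_eq_integral_Ioc]

lemma cs_ineq {f g : ℝ → ℝ} (hf : ContinuousOn f (Set.Icc (-1:ℝ) 1))
    (hg : ContinuousOn g (Set.Icc (-1:ℝ) 1)) :
    (∫ x in Set.Icc (-1:ℝ) 1, f x * g x)^2 ≤
      (∫ x in Set.Icc (-1:ℝ) 1, f x ^ 2) * (∫ x in Set.Icc (-1:ℝ) 1, g x ^ 2) := by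
  set s : Set ℝ := Set.Icc (-1:ℝ) 1 with hs
  have hf2 : IntegrableOn (fun x => f x ^ 2) s := (hf.pow 2).integrableOn_Icc
  have hg2 : IntegrableOn (fun x => g x ^ 2) s := (hg.pow 2).integrableOn_Icc
  have hfg : IntegrableOn (fun x => f x * g x) s := (hf.mul hg).integrableOn_Icc
  set A : ℝ := ∫ x in s, f x ^ 2 with hA
  set B : ℝ := ∫ x in s, f x * g x with hB
  set CC : ℝ := ∫ x in s, g x ^ 2 with hC
  have hq : ∀ t : ℝ, 0 ≤ A * (t * t) + (2 * B) * t + CC := by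
    intro t
    have expand : ∀ x : ℝ, (t * f x + g x)^2
        = (t * t) * f x ^ 2 + (2 * t) * (f x * g x) + g x ^ 2 := fun x => by ring
    have hnn : 0 ≤ ∫ x in s, (t * f x + g x)^2 :=
      setIntegral_nonneg measurableSet_Icc (fun x _ => sq_nonneg _)
    have heq : ∫ x in s, (t * f x + g x)^2
        = (t * t) * A + (2 * t) * B + CC := by
      rw [MeasureTheory.integral_congr_ae (Filter.Eventually.of_forall expand)]
      have e1 : ∫ x in s, ((t * t) * f x ^ 2 + (2 * t) * (f x * g x) + g x ^ 2)
          = (∫ x in s, ((t * t) * f x ^ 2 + (2 * t) * (f x * g x))) + ∫ x in s, g x ^ 2 :=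
        MeasureTheory.integral_add ((hf2.const_mul _).add (hfg.const_mul _)) hg2
      have e2 : ∫ x in s, ((t * t) * f x ^ 2 + (2 * t) * (f x * g x))
          = (∫ x in s, (t * t) * f x ^ 2) + ∫ x in s, (2 * t) * (f x * g x) :=
        MeasureTheory.integral_add (hf2.const_mul _) (hfg.const_mul _)
      rw [e1, e2, integral_const_mul, integral_const_mul]
    nlinarith [hnn, heq]
  have hd := discrim_le_zero hq
  rw [discrim] at hd
  nlinarith [hd]

lemma key_ftc (u : ℝ → ℝ) (hu : ContDiffOn ℝ 1 u (Set.Icc (-1:ℝ) 1)) (q : Polynomial ℝ) :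
    ∫ x in (-1:ℝ)..1,
        (derivWithin u (Set.Icc (-1:ℝ) 1) x * q.eval x + u x * (derivative q).eval x)
      = u 1 * q.eval 1 - u (-1) * q.eval (-1) := by
  set s : Set ℝ := Set.Icc (-1:ℝ) 1 with hs
  have hsu : UniqueDiffOn ℝ s := uniqueDiffOn_Icc (by norm_num)
  have hdu : ∀ x ∈ Set.Ioo (-1:ℝ) 1, HasDerivAt u (derivWithin u s x) x := by
    intro x hx
    have h1 : DifferentiableWithinAt ℝ u s x :=
      (hu.differentiableOn one_ne_zero) x (Set.Ioo_subset_Icc_self hx)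
    exact h1.hasDerivWithinAt.hasDerivAt (Icc_mem_nhds hx.1 hx.2)
  have hcont : ContinuousOn (fun y => u y * q.eval y) s :=
    hu.continuousOn.mul (q.continuous).continuousOn
  have hgc : ContinuousOn (derivWithin u s) s := hu.continuousOn_derivWithin hsu le_rfl
  have hint : IntervalIntegrable
      (fun x => derivWithin u s x * q.eval x + u x * (derivative q).eval x) volume (-1) 1 := by
    apply ContinuousOn.intervalIntegrable
    rw [Set.uIcc_of_le (by norm_num : (-1:ℝ) ≤ 1)]
    exact (hgc.mul (q.continuous).continuousOn).add
      (hu.continuousOn.mul ((derivative q).continuous).continuousOn)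
  exact intervalIntegral.integral_eq_sub_of_hasDeriv_right_of_le (by norm_num) hcont
    (fun x hx => ((hdu x hx).mul (q.hasDerivAt x)).hasDerivWithinAt) hint

lemma Iom_eq : Iom = Set.Icc (-1:ℝ) 1 := rfl

lemma trace_rep (p : ℕ) (u P : ℝ → ℝ) (hu : MemH 1 u) (hP : IsL2Proj p u P)
    (q : Polynomial ℝ) (hdeg : q.natDegree ≤ p + 1)
    (horthq : ∀ r : Polynomial ℝ, r.natDegree < p →
      ∫ x in (-1:ℝ)..1, q.eval x * r.eval x = 0) :
    (u 1 - P 1) * q.eval 1 - (u (-1) - P (-1)) * q.eval (-1)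
      = ∫ x in (-1:ℝ)..1, derivWithin u Iom x * q.eval x := by
  obtain ⟨⟨qP, hqPdeg, hqPeq⟩, horthP⟩ := hP
  simp only [Iom_eq]
  have h1 := key_ftc u hu q
  have hgc : ContinuousOn (derivWithin u Iom) (Set.Icc (-1:ℝ) 1) :=
    hu.continuousOn_derivWithin (uniqueDiffOn_Icc (by norm_num)) le_rfl
  have i1 : IntervalIntegrable
      (fun x => derivWithin u (Set.Icc (-1:ℝ) 1) x * q.eval x) volume (-1) 1 := by
    apply ContinuousOn.intervalIntegrable
    rw [Set.uIcc_of_le (by norm_num : (-1:ℝ) ≤ 1)]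
    exact hgc.mul (q.continuous).continuousOn
  have i2 : IntervalIntegrable (fun x => u x * (derivative q).eval x) volume (-1) 1 := by
    apply ContinuousOn.intervalIntegrable
    rw [Set.uIcc_of_le (by norm_num : (-1:ℝ) ≤ 1)]
    exact hu.continuousOn.mul ((derivative q).continuous).continuousOn
  rw [intervalIntegral.integral_add i1 i2] at h1
  have h2 := poly_parts qP q
  have h3 : ∫ x in (-1:ℝ)..1, (derivative qP).eval x * q.eval x = 0 := by
    by_cases hz : derivative qP = 0
    · simp [hz]
    · have hnd : qP.natDegree ≠ 0 := fun h0 => hz (derivative_of_natDegree_zero h0)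
      have h := horthq (derivative qP) (lt_of_lt_of_le (natDegree_derivative_lt hnd) hqPdeg)
      rw [← h]
      exact intervalIntegral.integral_congr (fun x _ => mul_comm _ _)
  have h4 : ∫ x in (-1:ℝ)..1, (P x - u x) * (derivative q).eval x = 0 := by
    rw [← Iom_int]
    exact horthP (derivative q) (le_trans (natDegree_derivative_le q) (by omega))
  have i3 : IntervalIntegrable (fun x => qP.eval x * (derivative q).eval x) volume (-1) 1 := by
    apply ContinuousOn.intervalIntegrable
    rw [Set.uIcc_of_le (by norm_num : (-1:ℝ) ≤ 1)]
    exact (qP.continuous).continuousOn.mul ((derivative q).continuous).continuousOn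
  have h5 : ∫ x in (-1:ℝ)..1, (P x - u x) * (derivative q).eval x
      = (∫ x in (-1:ℝ)..1, qP.eval x * (derivative q).eval x)
        - ∫ x in (-1:ℝ)..1, u x * (derivative q).eval x := by
    rw [← intervalIntegral.integral_sub i3 i2]
    exact intervalIntegral.integral_congr (fun x _ => by rw [hqPeq]; ring)
  rw [hqPeq 1, hqPeq (-1)]
  linear_combination -h1 + h2 - h3 - h4 + h5

lemma bound_of (p : ℕ) (u P : ℝ → ℝ) (hu : MemH 1 u) (hP : IsL2Proj p u P)
    (q : Polynomial ℝ) (hdeg : q.natDegree ≤ p + 1)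
    (horthq : ∀ r : Polynomial ℝ, r.natDegree < p →
      ∫ x in (-1:ℝ)..1, q.eval x * r.eval x = 0)
    (hqn : ∫ y in (-1:ℝ)..1, q.eval y * q.eval y
      = 2 * ((p:ℝ) + 1) / ((2 * (p:ℝ) + 1) * (2 * (p:ℝ) + 3))) :
    ((u 1 - P 1) * q.eval 1 - (u (-1) - P (-1)) * q.eval (-1))^2
      ≤ 2 * ((p:ℝ) + 1) / ((2 * (p:ℝ) + 1) * (2 * (p:ℝ) + 3)) * semSq 1 u := by
  rw [trace_rep p u P hu hP q hdeg horthq]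
  have hgc : ContinuousOn (derivWithin u Iom) (Set.Icc (-1:ℝ) 1) :=
    hu.continuousOn_derivWithin (uniqueDiffOn_Icc (by norm_num)) le_rfl
  have hcs := cs_ineq hgc (q.continuous).continuousOn
  have hsem : semSq 1 u = ∫ x in Set.Icc (-1:ℝ) 1, (derivWithin u Iom x)^2 := by
    rw [semSq, nsq, Iom_eq]
    refine setIntegral_congr_fun measurableSet_Icc (fun y hy => ?_)
    rw [iteratedDerivWithin_one]
  have hq2 : ∫ x in Set.Icc (-1:ℝ) 1, (q.eval x)^2
      = 2 * ((p:ℝ) + 1) / ((2 * (p:ℝ) + 1) * (2 * (p:ℝ) + 3)) := by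
    rw [Iom_int, ← hqn]
    exact intervalIntegral.integral_congr (fun x _ => by ring)
  rw [show (∫ x in (-1:ℝ)..1, derivWithin u Iom x * q.eval x)
      = ∫ x in Set.Icc (-1:ℝ) 1, derivWithin u Iom x * q.eval x from (Iom_int _).symm]
  calc (∫ x in Set.Icc (-1:ℝ) 1, derivWithin u Iom x * q.eval x)^2
      ≤ (∫ x in Set.Icc (-1:ℝ) 1, (derivWithin u Iom x)^2)
          * ∫ x in Set.Icc (-1:ℝ) 1, (q.eval x)^2 := hcs
    _ = 2 * ((p:ℝ) + 1) / ((2 * (p:ℝ) + 1) * (2 * (p:ℝ) + 3)) * semSq 1 u := by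
        rw [hq2, hsem]; ring


lemma leg_cross (p : ℕ) : ∫ x in (-1:ℝ)..1, (leg p).eval x * (leg (p+1)).eval x = 0 := by
  rw [intervalIntegral.integral_congr
    (fun x _ => mul_comm ((leg p).eval x) ((leg (p+1)).eval x))]
  exact leg_orth (lt_of_le_of_lt (leg_natDegree p) (Nat.lt_succ_self p))

lemma combo_sq (p : ℕ) (c s : ℝ) :
    ∫ x in (-1:ℝ)..1, (C c * (leg p + C s * leg (p+1))).eval x
        * (C c * (leg p + C s * leg (p+1))).eval x
      = c^2 * (2/(2*(p:ℝ)+1)) + c^2 * s^2 * (2/(2*(p:ℝ)+3)) := by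
  have e : ∀ x : ℝ, (C c * (leg p + C s * leg (p+1))).eval x
        * (C c * (leg p + C s * leg (p+1))).eval x
      = c^2 * ((leg p).eval x * (leg p).eval x)
        + (2*c^2*s) * ((leg p).eval x * (leg (p+1)).eval x)
        + (c^2*s^2) * ((leg (p+1)).eval x * (leg (p+1)).eval x) := by
    intro x; simp only [eval_mul, eval_add, eval_C]; ring
  rw [intervalIntegral.integral_congr (fun x _ => e x)]
  have il : ∀ m k : ℕ, IntervalIntegrable
      (fun x => ((leg m).eval x * (leg k).eval x)) volume (-1) 1 :=
    fun m k => ((leg m).continuous.mul (leg k).continuous).intervalIntegrable _ _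
  have e1 : ∫ x in (-1:ℝ)..1, (c^2 * ((leg p).eval x * (leg p).eval x)
        + (2*c^2*s) * ((leg p).eval x * (leg (p+1)).eval x)
        + (c^2*s^2) * ((leg (p+1)).eval x * (leg (p+1)).eval x))
      = (∫ x in (-1:ℝ)..1, (c^2 * ((leg p).eval x * (leg p).eval x)
        + (2*c^2*s) * ((leg p).eval x * (leg (p+1)).eval x)))
        + ∫ x in (-1:ℝ)..1, (c^2*s^2) * ((leg (p+1)).eval x * (leg (p+1)).eval x) :=
    intervalIntegral.integral_add (((il p p).const_mul _).add ((il p (p+1)).const_mul _))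
      ((il (p+1) (p+1)).const_mul _)
  have e2 : ∫ x in (-1:ℝ)..1, (c^2 * ((leg p).eval x * (leg p).eval x)
        + (2*c^2*s) * ((leg p).eval x * (leg (p+1)).eval x))
      = (∫ x in (-1:ℝ)..1, c^2 * ((leg p).eval x * (leg p).eval x))
        + ∫ x in (-1:ℝ)..1, (2*c^2*s) * ((leg p).eval x * (leg (p+1)).eval x) :=
    intervalIntegral.integral_add ((il p p).const_mul _) ((il p (p+1)).const_mul _)
  rw [e1, e2, intervalIntegral.integral_const_mul, intervalIntegral.integral_const_mul,
    intervalIntegral.integral_const_mul, leg_sq, leg_cross, leg_sq]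
  push_cast
  ring

lemma combo_natDegree (p : ℕ) (c s : ℝ) :
    (C c * (leg p + C s * leg (p+1))).natDegree ≤ p + 1 :=
  (natDegree_C_mul_le _ _).trans <| (natDegree_add_le _ _).trans <| max_le
    ((leg_natDegree p).trans (Nat.le_succ p))
    ((natDegree_C_mul_le _ _).trans (leg_natDegree (p+1)))

lemma combo_orth (p : ℕ) (c s : ℝ) {r : Polynomial ℝ} (hr : r.natDegree < p) :
    ∫ x in (-1:ℝ)..1, (C c * (leg p + C s * leg (p+1))).eval x * r.eval x = 0 := by
  have e : ∀ x : ℝ, (C c * (leg p + C s * leg (p+1))).eval x * r.eval x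
      = c * ((leg p).eval x * r.eval x) + (c*s) * ((leg (p+1)).eval x * r.eval x) := by
    intro x; simp only [eval_mul, eval_add, eval_C]; ring
  rw [intervalIntegral.integral_congr (fun x _ => e x)]
  have il : ∀ m : ℕ, IntervalIntegrable
      (fun x => ((leg m).eval x * r.eval x)) volume (-1) 1 :=
    fun m => ((leg m).continuous.mul r.continuous).intervalIntegrable _ _
  rw [intervalIntegral.integral_add ((il p).const_mul _) ((il (p+1)).const_mul _),
    intervalIntegral.integral_const_mul, intervalIntegral.integral_const_mul,
    leg_orth hr, leg_orth (hr.trans (Nat.lt_succ_self p))]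
  simp

lemma combo_eval_one (p : ℕ) (c s : ℝ) :
    (C c * (leg p + C s * leg (p+1))).eval 1 = c * (1 + s) := by
  simp only [eval_mul, eval_add, eval_C, leg_eval_one]
  ring

lemma combo_eval_neg_one (p : ℕ) (c s : ℝ) :
    (C c * (leg p + C s * leg (p+1))).eval (-1) = c * (-1:ℝ)^p * (1 - s) := by
  simp only [eval_mul, eval_add, eval_C, leg_eval_neg_one, pow_succ]
  ring

set_option maxHeartbeats 1000000 in
/-- For `u ∈ H¹(Ω)` and the `L²` projection `π_p u`, both traces satisfy
`|(u − π_p u)(±1)|² ≤ 2(p+1)/((2p+1)(2p+3)) · |u|₁²` and, in particular,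
`|(u − π_p u)(±1)|² ≤ 1/(2p+1) · |u|₁²`. -/
theorem trace_projection_error_H1 (p : ℕ) (u P : ℝ → ℝ)
    (hu : MemH 1 u) (hP : IsL2Proj p u P) :
    ∀ x ∈ ({1, -1} : Set ℝ),
      (u x - P x) ^ 2 ≤
          2 * ((p : ℝ) + 1) / ((2 * (p : ℝ) + 1) * (2 * (p : ℝ) + 3)) * semSq 1 u ∧
      (u x - P x) ^ 2 ≤ 1 / (2 * (p : ℝ) + 1) * semSq 1 u := by
  have h1p : (0:ℝ) < 2 * (p:ℝ) + 1 := by positivity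
  have h3p : (0:ℝ) < 2 * (p:ℝ) + 3 := by positivity
  have hsemnn : 0 ≤ semSq 1 u :=
    setIntegral_nonneg (Iom_eq ▸ measurableSet_Icc) (fun x _ => sq_nonneg _)
  have hcomp : 2 * ((p:ℝ) + 1) / ((2 * (p:ℝ) + 1) * (2 * (p:ℝ) + 3)) ≤ 1 / (2 * (p:ℝ) + 1) := by
    rw [div_le_div_iff₀ (by positivity) h1p]
    nlinarith
  have hpow : ((-1:ℝ)^p)^2 = 1 := by
    rw [← pow_mul, mul_comm, pow_mul]
    norm_num
  intro x hx
  have hx' : x = 1 ∨ x = -1 := by simpa using hx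
  rcases hx' with rfl | rfl
  · have hb := bound_of p u P hu hP (C (1/2 : ℝ) * (leg p + C 1 * leg (p+1)))
      (combo_natDegree p _ _) (fun r hr => combo_orth p _ _ hr)
      (by rw [combo_sq]; field_simp; ring)
    rw [combo_eval_one, combo_eval_neg_one] at hb
    norm_num at hb
    refine ⟨hb, hb.trans ?_⟩
    exact mul_le_mul_of_nonneg_right hcomp hsemnn
  · have hb := bound_of p u P hu hP (C ((-1:ℝ)^p/2) * (leg p + C (-1) * leg (p+1)))
      (combo_natDegree p _ _) (fun r hr => combo_orth p _ _ hr)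
      (by rw [combo_sq, div_pow, hpow]; field_simp; ring)
    rw [combo_eval_one, combo_eval_neg_one] at hb
    have he : (-1:ℝ)^p / 2 * (-1:ℝ)^p * (1 - -1) = 1 := by
      rw [show (-1:ℝ)^p / 2 * (-1:ℝ)^p * (1 - -1) = ((-1:ℝ)^p)^2 from by ring, hpow]
    rw [he] at hb
    norm_num at hb
    rw [show (u (-1) - P (-1))^2 = (P (-1) - u (-1))^2 from by ring]
    refine ⟨hb, hb.trans ?_⟩
    exact mul_le_mul_of_nonneg_right hcomp hsemnn
end

section
/- Let i, n ∈ ℕ₀ with i ≥ n, and let ψ_{i,n} be the n-th primitive of the Legendre polynomial L_i. Then ψ_{i,n}^{(ν)}(±1) = 0 for ν = 0,…,n−1, and for ν = n, n+1, …, n+i one has ψ_{i,n}^{(ν)}(±1) = L_i^{(ν−n)}(±1) = (±1)^{i+n−ν} / (2^{ν−n} (ν−n)!) · (i+ν−n)!/(i−ν+n)!. -/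
open MeasureTheory Polynomial

noncomputable section AuxPsi

/-- Auxiliary: the polynomial representing `psi i n` (for `n ≤ i`). -/
def Qp (i n : ℕ) : Polynomial ℝ :=
  ((1 : ℝ) / (2 ^ i * i.factorial)) • derivative^[i - n] ((X ^ 2 - 1) ^ i)

lemma iteratedDeriv_polyeval (k : ℕ) (p : Polynomial ℝ) :
    iteratedDeriv k (fun x => p.eval x) = fun x => (derivative^[k] p).eval x := by
  induction k generalizing p with
  | zero => simp
  | succ k ih =>
    rw [iteratedDeriv_succ',
      show (deriv fun x => p.eval x) = (fun x => p.derivative.eval x) from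
        funext fun x => p.deriv, ih, Function.iterate_succ_apply]

lemma iter_deriv_factor (i : ℕ) : ∀ k ≤ i, ∃ g : Polynomial ℝ,
    derivative^[k] ((X ^ 2 - 1) ^ i) = (X ^ 2 - 1) ^ (i - k) * g := by
  intro k hk
  induction k with
  | zero => exact ⟨1, by simp⟩
  | succ k ih =>
    obtain ⟨g, hg⟩ := ih (by omega)
    have hm : i - k = (i - (k + 1)) + 1 := by omega
    refine ⟨C ((i - (k + 1) + 1 : ℕ) : ℝ) * derivative (X ^ 2 - 1 : ℝ[X]) * g
      + (X ^ 2 - 1) * derivative g, ?_⟩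
    rw [Function.iterate_succ_apply', hg, hm, derivative_mul, derivative_pow]
    simp only [Nat.add_sub_cancel]
    ring

lemma Qp_deriv (i n : ℕ) (h : n + 1 ≤ i) : derivative (Qp i (n + 1)) = Qp i n := by
  unfold Qp
  rw [derivative_smul]
  congr 1
  rw [← Function.iterate_succ_apply' derivative]
  congr 1
  omega

lemma Qp_eval_sq_one (i n : ℕ) (h1 : 1 ≤ n) (h2 : n ≤ i) (x : ℝ) (hx : x ^ 2 = 1) :
    (Qp i n).eval x = 0 := by
  obtain ⟨g, hg⟩ := iter_deriv_factor i (i - n) (by omega)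
  have hin : i - (i - n) = n := by omega
  unfold Qp
  rw [hg, hin, eval_smul, eval_mul, eval_pow]
  simp [hx, zero_pow (by omega : n ≠ 0)]

lemma psi_eq (i : ℕ) : ∀ n, n ≤ i → psi i n = fun x => (Qp i n).eval x := by
  intro n
  induction n with
  | zero => intro _; funext x; simp [psi, Qp, leg]
  | succ n ih =>
    intro h
    funext x
    show (∫ t in (-1 : ℝ)..x, psi i n t) = _
    rw [ih (by omega)]
    have hd : ∀ t ∈ Set.uIcc (-1 : ℝ) x, HasDerivAt (fun y => (Qp i (n + 1)).eval y)
        ((Qp i n).eval t) t := by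
      intro t _
      have := (Qp i (n + 1)).hasDerivAt t
      rwa [Qp_deriv i n h] at this
    rw [intervalIntegral.integral_eq_sub_of_hasDerivAt hd
      ((Qp i n).continuous.intervalIntegrable _ _),
      Qp_eval_sq_one i (n + 1) (by omega) h (-1) (by norm_num)]
    ring

lemma key (a b : ℝ) (i k : ℕ) (hk : k ≤ i) :
    (derivative^[i + k] (((X - C a) * (X - C b)) ^ i)).eval a =
      ((i + k).choose k : ℝ) * i.factorial * i.descFactorial k * (a - b) ^ (i - k) := by
  rw [mul_pow, Polynomial.iterate_derivative_mul, eval_finset_sum]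
  rw [Finset.sum_eq_single k]
  · have h1 : i + k - k = i := by omega
    rw [h1, Polynomial.iterate_derivative_X_sub_pow_self,
      Polynomial.iterate_derivative_X_sub_pow]
    simp [eval_smul, smul_eq_mul]
    ring
  · intro j hj hne
    rw [Polynomial.iterate_derivative_X_sub_pow, Polynomial.iterate_derivative_X_sub_pow]
    rcases lt_or_gt_of_ne hne with h | h
    · have hz : i.descFactorial (i + k - j) = 0 := by
        rw [Nat.descFactorial_eq_zero_iff_lt]; omega
      simp [hz]
    · have hj' : j ≤ i + k := by
        have := Finset.mem_range.mp hj; omega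
      have hpos : i - (i + k - j) ≠ 0 := by omega
      simp [sub_self, zero_pow hpos]
  · intro h
    exact absurd (Finset.mem_range.mpr (by omega)) h

lemma factored : (X ^ 2 - 1 : ℝ[X]) = (X - C 1) * (X - C (-1)) := by
  simp only [map_one, map_neg]
  ring

lemma arith (i k : ℕ) (hk : k ≤ i) :
    (1 : ℝ) / (2 ^ i * i.factorial) *
      (((i + k).choose k : ℝ) * i.factorial * i.descFactorial k * 2 ^ (i - k)) =
      ((i + k).factorial : ℝ) / (2 ^ k * k.factorial * (i - k).factorial) := by
  have hdF : (i.descFactorial k : ℝ) * (i - k).factorial = i.factorial := by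
    have : i.descFactorial k * (i - k).factorial = i.factorial := by
      rw [Nat.descFactorial_eq_factorial_mul_choose, ← Nat.choose_mul_factorial_mul_factorial hk]
      ring
    exact_mod_cast this
  have hch : ((i + k).choose k : ℝ) * k.factorial * i.factorial = (i + k).factorial := by
    have h := Nat.choose_mul_factorial_mul_factorial (show k ≤ i + k by omega)
    rw [Nat.add_sub_cancel] at h
    exact_mod_cast h
  have h2 : (2 : ℝ) ^ i = 2 ^ k * 2 ^ (i - k) := by
    rw [← pow_add]; congr 1; omega
  have hi : (i.factorial : ℝ) ≠ 0 := by positivity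
  have hk' : (k.factorial : ℝ) ≠ 0 := by positivity
  have hik : ((i - k).factorial : ℝ) ≠ 0 := by positivity
  field_simp
  rw [h2]
  linear_combination (2 ^ k * 2 ^ (i - k) * ((i + k).choose k : ℝ) * k.factorial)
      * hdF + (2 ^ k * 2 ^ (i - k)) * hch

lemma leg_deriv_one (i k : ℕ) (hk : k ≤ i) :
    (derivative^[k] (leg i)).eval 1 =
      ((i + k).factorial : ℝ) / (2 ^ k * k.factorial * (i - k).factorial) := by
  unfold leg
  rw [Polynomial.iterate_derivative_smul, ← Function.iterate_add_apply, eval_smul, smul_eq_mul]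
  rw [show k + i = i + k by omega, factored, key 1 (-1) i k hk]
  rw [show (1 : ℝ) - (-1) = 2 by norm_num]
  exact arith i k hk

lemma leg_deriv_neg_one (i k : ℕ) (hk : k ≤ i) :
    (derivative^[k] (leg i)).eval (-1) =
      (-1 : ℝ) ^ (i - k) * ((i + k).factorial : ℝ) /
        (2 ^ k * k.factorial * (i - k).factorial) := by
  unfold leg
  rw [Polynomial.iterate_derivative_smul, ← Function.iterate_add_apply, eval_smul, smul_eq_mul]
  rw [show k + i = i + k by omega, factored, mul_comm (X - C 1) (X - C (-1)),
    key (-1) 1 i k hk]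
  rw [show (-1 : ℝ) - 1 = -2 by norm_num,
    show ((-2 : ℝ)) ^ (i - k) = (-1) ^ (i - k) * 2 ^ (i - k) by rw [neg_pow]]
  rw [mul_div_assoc]
  linear_combination ((-1 : ℝ) ^ (i - k)) * arith i k hk

lemma deriv_Qp (i n ν : ℕ) (h : ν ≤ n) (hni : n ≤ i) :
    derivative^[ν] (Qp i n) = Qp i (n - ν) := by
  unfold Qp
  rw [Polynomial.iterate_derivative_smul, ← Function.iterate_add_apply]
  congr 2
  omega

lemma Qp_zero (i : ℕ) : Qp i 0 = leg i := by
  simp [Qp, leg]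

end AuxPsi

/-- Endpoint values of derivatives of the primitives of Legendre
polynomials: for `ν < n`, `ψ_{i,n}^{(ν)}(±1) = 0`; and for `n ≤ ν ≤ n + i`,
`ψ_{i,n}^{(ν)}(±1) = L_i^{(ν−n)}(±1) = (±1)^{i+n−ν}/(2^{ν−n}(ν−n)!) · (i+ν−n)!/(i−ν+n)!`. -/
theorem psi_deriv_endpoint_values (i n : ℕ) (hni : n ≤ i) :
    (∀ ν < n, iteratedDeriv ν (psi i n) 1 = 0 ∧ iteratedDeriv ν (psi i n) (-1) = 0) ∧
    (∀ ν, n ≤ ν → ν ≤ n + i →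
      iteratedDeriv ν (psi i n) 1 = iteratedDeriv (ν - n) (fun x => (leg i).eval x) 1 ∧
      iteratedDeriv ν (psi i n) (-1) = iteratedDeriv (ν - n) (fun x => (leg i).eval x) (-1) ∧
      iteratedDeriv ν (psi i n) 1 =
        1 / (2 ^ (ν - n) * ((ν - n).factorial : ℝ)) *
          (((i + ν - n).factorial : ℝ) / ((i + n - ν).factorial : ℝ)) ∧
      iteratedDeriv ν (psi i n) (-1) =
        (-1 : ℝ) ^ (i + n - ν) / (2 ^ (ν - n) * ((ν - n).factorial : ℝ)) *
          (((i + ν - n).factorial : ℝ) / ((i + n - ν).factorial : ℝ))) := by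
  have hrep : ∀ ν : ℕ, iteratedDeriv ν (psi i n) = fun x => (derivative^[ν] (Qp i n)).eval x := by
    intro ν
    rw [psi_eq i n hni, iteratedDeriv_polyeval]
  constructor
  · intro ν hν
    rw [hrep ν, deriv_Qp i n ν (by omega) hni]
    constructor
    · exact Qp_eval_sq_one i (n - ν) (by omega) (by omega) 1 (by norm_num)
    · exact Qp_eval_sq_one i (n - ν) (by omega) (by omega) (-1) (by norm_num)
  · intro ν hn hi
    set k := ν - n with hkdef
    have hk : k ≤ i := by omega
    have hleg : derivative^[ν] (Qp i n) = derivative^[k] (leg i) := by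
      rw [show ν = k + n by omega, Function.iterate_add_apply,
        deriv_Qp i n n le_rfl hni, Nat.sub_self, Qp_zero]
    have h1 : iteratedDeriv ν (psi i n) 1 = (derivative^[k] (leg i)).eval 1 := by
      rw [hrep ν, hleg]
    have h2 : iteratedDeriv ν (psi i n) (-1) = (derivative^[k] (leg i)).eval (-1) := by
      rw [hrep ν, hleg]
    have e1 : i + ν - n = i + k := by omega
    have e2 : i + n - ν = i - k := by omega
    refine ⟨?_, ?_, ?_, ?_⟩
    · rw [h1, iteratedDeriv_polyeval]
    · rw [h2, iteratedDeriv_polyeval]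
    · rw [h1, e1, e2, leg_deriv_one i k hk]
      ring
    · rw [h2, e1, e2, leg_deriv_neg_one i k hk]
      ring
end
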